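/- For the Gaussian kernel k_σ(x,y) = exp(−(x−y)²/(2σ²)) on ℝ with fixed bandwidth σ > 0, and distributions P_i = N(0, i²), Q_i = N(0, 4i²), the population squared MMD γ²_{k_σ}(P_i, Q_i) = (1 + 2i²/σ²)^{−1/2} + (1 + 8i²/σ²)^{−1/2} − 2(1 + 5i²/σ²)^{−1/2} converges to 0 as i → ∞. -/

import Mathlib

open MeasureTheory ProbabilityTheory Filter

/-- Gaussian kernel of bandwidth `σ` on `ℝ`. -/
noncomputable def gaussKer (σ : ℝ) (x y : ℝ) : ℝ :=
  Real.exp (-(x - y) ^ 2 / (2 * σ ^ 2))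

/-- Population squared MMD between two measures on `ℝ` for a kernel `k`. -/
noncomputable def popMMD (k : ℝ → ℝ → ℝ) (P Q : Measure ℝ) : ℝ :=
  (∫ x, ∫ x', k x x' ∂P ∂P) + (∫ y, ∫ y', k y y' ∂Q ∂Q)
    - 2 * ∫ x, ∫ y, k x y ∂Q ∂P

-- core lemma
lemma gauss_exp_integral (c : ℝ) (hc : 0 < c) (a : NNReal) (m : ℝ) :
    ∫ y, Real.exp (-(y - m) ^ 2 / (2 * c)) ∂(gaussianReal 0 a)
      = Real.sqrt (c / (c + a)) * Real.exp (-m ^ 2 / (2 * (c + a))) := by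
  by_cases ha : a = 0
  · subst ha
    simp [div_self hc.ne', Real.exp_ne_zero]
  · set A : ℝ := (a : ℝ) with hA
    have hApos : 0 < A := NNReal.coe_pos.mpr (zero_lt_iff.mpr ha)
    have hAc : 0 < A + c := by linarith
    rw [gaussianReal_of_var_ne_zero _ ha]
    have hpdf : (gaussianPDF 0 a) = fun y => (((gaussianPDFReal 0 a y).toNNReal : NNReal) : ENNReal) := rfl
    rw [hpdf, integral_withDensity_eq_integral_smul
      ((measurable_gaussianPDFReal 0 a).real_toNNReal) _]
    have key : ∀ y : ℝ, ((gaussianPDFReal 0 a y).toNNReal : NNReal) • Real.exp (-(y - m) ^ 2 / (2 * c))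
        = ((Real.sqrt (2 * Real.pi * A))⁻¹ * Real.exp (-m ^ 2 / (2 * (A + c))))
          * Real.exp (-((A + c) / (2 * A * c)) * (y - A * m / (A + c)) ^ 2) := by
      intro y
      rw [NNReal.smul_def, smul_eq_mul, Real.coe_toNNReal _ (gaussianPDFReal_nonneg 0 a y)]
      unfold gaussianPDFReal
      have : Real.exp (-(y - 0) ^ 2 / (2 * A)) * Real.exp (-(y - m) ^ 2 / (2 * c))
          = Real.exp (-m ^ 2 / (2 * (A + c))) * Real.exp (-((A + c) / (2 * A * c)) * (y - A * m / (A + c)) ^ 2) := by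
        rw [← Real.exp_add, ← Real.exp_add]
        congr 1
        field_simp
        ring
      calc (Real.sqrt (2 * Real.pi * A))⁻¹ * Real.exp (-(y - 0) ^ 2 / (2 * A)) * Real.exp (-(y - m) ^ 2 / (2 * c))
          = (Real.sqrt (2 * Real.pi * A))⁻¹ * (Real.exp (-(y - 0) ^ 2 / (2 * A)) * Real.exp (-(y - m) ^ 2 / (2 * c))) := by ring
        _ = _ := by rw [this]; ring
    simp_rw [key]
    rw [integral_const_mul]
    have htrans : ∫ y : ℝ, Real.exp (-((A + c) / (2 * A * c)) * (y - A * m / (A + c)) ^ 2)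
        = Real.sqrt (Real.pi / ((A + c) / (2 * A * c))) := by
      rw [← integral_gaussian ((A + c) / (2 * A * c))]
      exact integral_sub_right_eq_self (fun y => Real.exp (-((A + c) / (2 * A * c)) * y ^ 2)) (A * m / (A + c))
    rw [htrans]
    have hπ : Real.pi / ((A + c) / (2 * A * c)) = (2 * Real.pi * A) * (c / (c + A)) := by
      field_simp
      ring
    rw [hπ, Real.sqrt_mul (by positivity)]
    have hs : Real.sqrt (2 * Real.pi * A) ≠ 0 := by positivity
    have : c + (a : ℝ) = A + c := by rw [hA]; ring
    rw [this]
    field_simp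
    rw [← Real.sqrt_mul (by positivity : (0:ℝ) ≤ 2 * Real.pi), ← Real.sqrt_mul (by positivity : (0:ℝ) ≤ 2 * Real.pi * A)]
    congr 1
    ring

lemma double_int (σ : ℝ) (hσ : 0 < σ) (a b : NNReal) :
    ∫ x, ∫ y, gaussKer σ x y ∂(gaussianReal 0 a) ∂(gaussianReal 0 b)
      = Real.sqrt (σ ^ 2 / (σ ^ 2 + a + b)) := by
  have hσ2 : 0 < σ ^ 2 := by positivity
  have hinner : ∀ x : ℝ, ∫ y, gaussKer σ x y ∂(gaussianReal 0 a)
      = Real.sqrt (σ ^ 2 / (σ ^ 2 + a)) * Real.exp (-(x - 0) ^ 2 / (2 * (σ ^ 2 + a))) := by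
    intro x
    have h : ∀ y : ℝ, gaussKer σ x y = Real.exp (-(y - x) ^ 2 / (2 * σ ^ 2)) := by
      intro y; unfold gaussKer; rw [show (x - y) ^ 2 = (y - x) ^ 2 by ring]
    simp_rw [h]
    rw [gauss_exp_integral (σ ^ 2) hσ2 a x, sub_zero]
  simp_rw [hinner]
  rw [integral_const_mul, gauss_exp_integral (σ ^ 2 + a) (by positivity) b 0]
  have hb0 : Real.exp (-(0:ℝ) ^ 2 / (2 * (σ ^ 2 + (a:ℝ) + b))) = 1 := by norm_num
  rw [hb0, mul_one, ← Real.sqrt_mul (by positivity)]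
  congr 1
  have h1 : (0:ℝ) < σ ^ 2 + a := by positivity
  have h2 : (0:ℝ) < σ ^ 2 + a + b := by positivity
  field_simp


lemma sqrt_to_rpow (σ : ℝ) (hσ : 0 < σ) (s : ℝ) (hs : 0 ≤ s) :
    Real.sqrt (σ ^ 2 / (σ ^ 2 + s)) = (1 + s / σ ^ 2) ^ (-(1 / 2 : ℝ)) := by
  have hpos : (0:ℝ) < (σ ^ 2 + s) / σ ^ 2 := by positivity
  have h2 : σ ^ 2 / (σ ^ 2 + s) = ((σ ^ 2 + s) / σ ^ 2)⁻¹ := by rw [inv_div]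
  have h1 : (1:ℝ) + s / σ ^ 2 = (σ ^ 2 + s) / σ ^ 2 := by field_simp
  rw [h2, h1, Real.sqrt_eq_rpow, ← Real.rpow_neg_one ((σ ^ 2 + s) / σ ^ 2)]
  rw [← Real.rpow_mul hpos.le]
  norm_num

/-- For the fixed-bandwidth Gaussian kernel, the population squared MMD between
`N(0, i²)` and `N(0, 4i²)`, which equals
`(1 + 2i²/σ²)^{−1/2} + (1 + 8i²/σ²)^{−1/2} − 2(1 + 5i²/σ²)^{−1/2}`,
converges to `0` as `i → ∞`. -/
theorem mmd_fixed_bandwidth_vanishes (σ : ℝ) (hσ : 0 < σ) :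
    (∀ i : ℕ,
        popMMD (gaussKer σ)
            (gaussianReal 0 ⟨(i : ℝ) ^ 2, sq_nonneg _⟩)
            (gaussianReal 0 ⟨4 * (i : ℝ) ^ 2, by positivity⟩)
          = (1 + 2 * (i : ℝ) ^ 2 / σ ^ 2) ^ (-(1 / 2 : ℝ))
            + (1 + 8 * (i : ℝ) ^ 2 / σ ^ 2) ^ (-(1 / 2 : ℝ))
            - 2 * (1 + 5 * (i : ℝ) ^ 2 / σ ^ 2) ^ (-(1 / 2 : ℝ))) ∧
      Tendsto
        (fun i : ℕ =>
          popMMD (gaussKer σ)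
            (gaussianReal 0 ⟨(i : ℝ) ^ 2, sq_nonneg _⟩)
            (gaussianReal 0 ⟨4 * (i : ℝ) ^ 2, by positivity⟩))
        atTop (nhds 0) := by
  have hform : ∀ i : ℕ,
      popMMD (gaussKer σ)
          (gaussianReal 0 ⟨(i : ℝ) ^ 2, sq_nonneg _⟩)
          (gaussianReal 0 ⟨4 * (i : ℝ) ^ 2, by positivity⟩)
        = (1 + 2 * (i : ℝ) ^ 2 / σ ^ 2) ^ (-(1 / 2 : ℝ))
          + (1 + 8 * (i : ℝ) ^ 2 / σ ^ 2) ^ (-(1 / 2 : ℝ))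
          - 2 * (1 + 5 * (i : ℝ) ^ 2 / σ ^ 2) ^ (-(1 / 2 : ℝ)) := by
    intro i
    unfold popMMD
    erw [double_int σ hσ, double_int σ hσ, double_int σ hσ]
    erw [NNReal.coe_mk, NNReal.coe_mk]
    rw [show σ ^ 2 + (i : ℝ) ^ 2 + (i : ℝ) ^ 2 = σ ^ 2 + 2 * (i : ℝ) ^ 2 by ring,
      show σ ^ 2 + 4 * (i : ℝ) ^ 2 + 4 * (i : ℝ) ^ 2 = σ ^ 2 + 8 * (i : ℝ) ^ 2 by ring,
      show σ ^ 2 + 4 * (i : ℝ) ^ 2 + (i : ℝ) ^ 2 = σ ^ 2 + 5 * (i : ℝ) ^ 2 by ring,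
      sqrt_to_rpow σ hσ (2 * (i : ℝ) ^ 2) (by positivity),
      sqrt_to_rpow σ hσ (8 * (i : ℝ) ^ 2) (by positivity),
      sqrt_to_rpow σ hσ (5 * (i : ℝ) ^ 2) (by positivity)]
  refine ⟨hform, ?_⟩
  have hterm : ∀ c : ℝ, 0 < c →
      Tendsto (fun i : ℕ => (1 + c * (i : ℝ) ^ 2 / σ ^ 2) ^ (-(1 / 2 : ℝ))) atTop (nhds 0) := by
    intro c hc
    have hbase : Tendsto (fun i : ℕ => 1 + c * (i : ℝ) ^ 2 / σ ^ 2) atTop atTop := by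
      apply tendsto_atTop_add_const_left
      have h1 : Tendsto (fun i : ℕ => (i : ℝ) ^ 2) atTop atTop :=
        (tendsto_pow_atTop (two_ne_zero)).comp tendsto_natCast_atTop_atTop
      have h2 : Tendsto (fun i : ℕ => c * (i : ℝ) ^ 2) atTop atTop := h1.const_mul_atTop hc
      exact h2.atTop_div_const (by positivity)
    exact (tendsto_rpow_neg_atTop (by norm_num : (0:ℝ) < 1 / 2)).comp hbase
  have := ((hterm 2 (by norm_num)).add (hterm 8 (by norm_num))).sub
    ((hterm 5 (by norm_num)).const_mul 2)
  simp only [add_zero, mul_zero, sub_zero] at this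
  have hzero : Tendsto
      (fun i : ℕ => (1 + 2 * (i : ℝ) ^ 2 / σ ^ 2) ^ (-(1 / 2 : ℝ))
        + (1 + 8 * (i : ℝ) ^ 2 / σ ^ 2) ^ (-(1 / 2 : ℝ))
        - 2 * (1 + 5 * (i : ℝ) ^ 2 / σ ^ 2) ^ (-(1 / 2 : ℝ))) atTop (nhds 0) := by
    simpa using this
  exact (tendsto_congr fun i => (hform i).symm).mp hzero
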